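/- There is a fixed singly exponential function E (i.e., E(n) = 2^{p(n)} for some polynomial p) such that the following holds: let Φ be a finite set of linear inequalities of the form a₀ + a₁x₁ + ⋯ + a_nx_n ≤ b₀ + b₁x₁ + ⋯ + b_nx_n in variables x₁,…,x_n, with all coefficients in ℕ, and let ‖Φ‖ be the size of Φ under binary encoding of integers. If Φ has a solution over ℕ* = ℕ ∪ {ℵ₀}, then Φ has a solution over ℕ* in which every finite value is at most E(‖Φ‖). -/

import Mathlib

/-- A linear inequality a₀ + a₁x₁ + ⋯ + a_nx_n ≤ b₀ + b₁x₁ + ⋯ + b_nx_n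
with coefficients in ℕ, in n variables. -/
structure LinIneq (n : ℕ) where
  a0 : ℕ
  a : Fin n → ℕ
  b0 : ℕ
  b : Fin n → ℕ

/-- The inequality holds for an assignment of values in ℕ* = ℕ ∪ {ℵ₀}
(here ℕ∞ = WithTop ℕ, whose arithmetic satisfies ℵ₀ + x = ℵ₀, 0·ℵ₀ = 0, and
n·ℵ₀ = ℵ₀ for n > 0). -/
def LinIneq.Holds {n : ℕ} (e : LinIneq n) (x : Fin n → ℕ∞) : Prop :=
  (e.a0 : ℕ∞) + ∑ i, (e.a i : ℕ∞) * x i ≤ (e.b0 : ℕ∞) + ∑ i, (e.b i : ℕ∞) * x i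

/-- The size of an inequality, with integers encoded in binary. -/
def LinIneq.size {n : ℕ} (e : LinIneq n) : ℕ :=
  (Nat.log 2 e.a0 + 1) + (Nat.log 2 e.b0 + 1) +
    ∑ i, ((Nat.log 2 (e.a i) + 1) + (Nat.log 2 (e.b i) + 1))

/-- The size ‖Φ‖ of a finite system of inequalities. -/
def sysSize {n : ℕ} (Φ : List (LinIneq n)) : ℕ := (Φ.map LinIneq.size).sum

/-- Lemma 23: there is a fixed singly exponential function E(n) = 2^{p(n)} such that
any finite system of linear inequalities over ℕ* which is solvable has a solution
whose finite values are all at most E(‖Φ‖). -/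
theorem small_solutions_over_NStar : ∃ p : Polynomial ℕ,
    ∀ (n : ℕ) (Φ : List (LinIneq n)),
      (∃ x : Fin n → ℕ∞, ∀ e ∈ Φ, e.Holds x) →
      ∃ x : Fin n → ℕ∞, (∀ e ∈ Φ, e.Holds x) ∧
        ∀ i, x i ≠ ⊤ → x i ≤ ((2 ^ p.eval (sysSize Φ) : ℕ) : ℕ∞) := by
  classical
  refine ⟨2 * Polynomial.X ^ 2 + 3 * Polynomial.X + 1, ?_⟩
  rintro n Φ ⟨x, hx⟩
  by_cases hΦ : Φ = []
  · subst hΦ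
    exact ⟨fun _ => ⊤, by simp, fun i hi => absurd rfl hi⟩
  obtain ⟨e₀, he₀⟩ := List.exists_mem_of_ne_nil Φ hΦ
  set s := sysSize Φ with hs
  have hsize : ∀ e ∈ Φ, e.size ≤ s := by
    intro e he
    exact List.single_le_sum (fun c _ => Nat.zero_le c) _ (List.mem_map_of_mem he)
  -- every coefficient appearing in Φ is < 2 ^ s
  have hlog : ∀ c : ℕ, Nat.log 2 c + 1 ≤ s → c < 2 ^ s := by
    intro c hc
    calc c < 2 ^ (Nat.log 2 c + 1) := Nat.lt_pow_succ_log_self (by norm_num) c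
    _ ≤ 2 ^ s := Nat.pow_le_pow_right (by norm_num) hc
  have ha0 : ∀ e ∈ Φ, e.a0 < 2 ^ s := by
    intro e he
    refine hlog _ ?_
    have := hsize e he
    unfold LinIneq.size at this
    omega
  have hb0 : ∀ e ∈ Φ, e.b0 < 2 ^ s := by
    intro e he
    refine hlog _ ?_
    have := hsize e he
    unfold LinIneq.size at this
    omega
  have hsumterm : ∀ e ∈ Φ, ∀ k : Fin n,
      (Nat.log 2 (e.a k) + 1) + (Nat.log 2 (e.b k) + 1)
        ≤ ∑ i, ((Nat.log 2 (e.a i) + 1) + (Nat.log 2 (e.b i) + 1)) := by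
    intro e _ k
    exact Finset.single_le_sum
      (f := fun i => (Nat.log 2 (e.a i) + 1) + (Nat.log 2 (e.b i) + 1))
      (fun i _ => Nat.zero_le _) (Finset.mem_univ k)
  have ha : ∀ e ∈ Φ, ∀ k, e.a k < 2 ^ s := by
    intro e he k
    refine hlog _ ?_
    have h1 := hsumterm e he k
    have h2 := hsize e he
    unfold LinIneq.size at h2
    omega
  have hb : ∀ e ∈ Φ, ∀ k, e.b k < 2 ^ s := by
    intro e he k
    refine hlog _ ?_
    have h1 := hsumterm e he k
    have h2 := hsize e he
    unfold LinIneq.size at h2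
    omega
  -- number of variables is at most s
  have hns : n ≤ s := by
    have h2 := hsize e₀ he₀
    unfold LinIneq.size at h2
    have : 2 * n ≤ ∑ i : Fin n, ((Nat.log 2 (e₀.a i) + 1) + (Nat.log 2 (e₀.b i) + 1)) := by
      calc 2 * n = ∑ _i : Fin n, 2 := by simp [Finset.sum_const, mul_comm]
      _ ≤ _ := Finset.sum_le_sum (fun i _ => by omega)
    omega
  -- the scale of thresholds
  set E : ℕ → ℕ := fun t => 2 ^ ((2 * s + 1) * (t + 1)) with hE
  have hEmono : ∀ ⦃u v : ℕ⦄, u ≤ v → E u ≤ E v := by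
    intro u v huv
    exact Nat.pow_le_pow_right (by norm_num) (Nat.mul_le_mul_left _ (by omega))
  have hEone : ∀ t, 1 ≤ E t := fun t => Nat.one_le_two_pow
  have hEstep : ∀ t, 2 ^ s + 2 ^ s * 2 ^ s * E t ≤ E (t + 1) := by
    intro t
    have h1 : E (t + 1) = E t * 2 ^ (2 * s + 1) := by
      have hexp : (2 * s + 1) * (t + 1 + 1) = (2 * s + 1) * (t + 1) + (2 * s + 1) := by ring
      simp only [hE, hexp, pow_add]
    have h2 : 2 ^ (2 * s + 1) = 2 * (2 ^ s * 2 ^ s) := by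
      have hexp : 2 * s + 1 = 1 + (s + s) := by ring
      rw [hexp, pow_add, pow_add, pow_one]
    calc 2 ^ s + 2 ^ s * 2 ^ s * E t
        ≤ 2 ^ s * 2 ^ s * E t + 2 ^ s * 2 ^ s * E t := by
          have h3 : 2 ^ s ≤ 2 ^ s * 2 ^ s * E t := by
            have h4 := hEone t
            have h5 : 1 ≤ 2 ^ s := Nat.one_le_two_pow
            nlinarith
          omega
    _ = E t * (2 * (2 ^ s * 2 ^ s)) := by ring
    _ = E (t + 1) := by rw [h1, h2]
  -- choose a threshold t ≤ n such that no coordinate of x lies in (E t, E (t+1)]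
  have hgap : ∃ t, t ≤ n ∧ ∀ i, ¬(((E t : ℕ∞) < x i) ∧ x i ≤ (E (t + 1) : ℕ∞)) := by
    by_contra hcon
    push_neg at hcon
    have hw : ∀ t : Fin (n + 1), ∃ i, (E (t : ℕ) : ℕ∞) < x i ∧ x i ≤ (E ((t : ℕ) + 1) : ℕ∞) :=
      fun t => hcon t (Nat.lt_succ_iff.mp t.isLt)
    set w : Fin (n + 1) → Fin n := fun t => (hw t).choose with hwdef
    have hwspec : ∀ t : Fin (n + 1),
        (E (t : ℕ) : ℕ∞) < x (w t) ∧ x (w t) ≤ (E ((t : ℕ) + 1) : ℕ∞) :=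
      fun t => (hw t).choose_spec
    have hkey : ∀ t1 t2 : Fin (n + 1), (t1 : ℕ) < (t2 : ℕ) → w t1 ≠ w t2 := by
      intro t1 t2 hlt heq
      have h1 := (hwspec t1).2
      have h2 := (hwspec t2).1
      rw [heq] at h1
      have hle : (E ((t1 : ℕ) + 1) : ℕ∞) ≤ (E (t2 : ℕ) : ℕ∞) := by
        exact_mod_cast hEmono (by omega)
      exact absurd (h1.trans hle) (not_le.mpr h2)
    have hinj : Function.Injective w := by
      intro t1 t2 heq
      rcases lt_trichotomy (t1 : ℕ) (t2 : ℕ) with h | h | h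
      · exact absurd heq (hkey t1 t2 h)
      · exact Fin.ext h
      · exact absurd heq.symm (hkey t2 t1 h)
    have := Fintype.card_le_of_injective w hinj
    simp [Fintype.card_fin] at this
  obtain ⟨t, htn, hempty⟩ := hgap
  -- the truncated solution
  set y : Fin n → ℕ∞ := fun i => if x i ≤ (E t : ℕ∞) then x i else ⊤ with hy
  have hy_small : ∀ k, x k ≤ (E t : ℕ∞) → y k = x k := fun k h => if_pos h
  have hy_ne_top : ∀ i, y i ≠ ⊤ → (y i = x i ∧ x i ≤ (E t : ℕ∞)) := by
    intro i hi
    by_cases h : x i ≤ (E t : ℕ∞)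
    · exact ⟨if_pos h, h⟩
    · exact absurd (if_neg h) hi
  refine ⟨y, ?_, ?_⟩
  · intro e he
    by_cases hR : (e.b0 : ℕ∞) + ∑ i, (e.b i : ℕ∞) * y i = ⊤
    · show (e.a0 : ℕ∞) + ∑ i, (e.a i : ℕ∞) * y i ≤ (e.b0 : ℕ∞) + ∑ i, (e.b i : ℕ∞) * y i
      rw [hR]
      exact le_top
    · -- the right-hand side is finite: all variables with positive b-coefficient are small
      have hbvar : ∀ k, e.b k ≠ 0 → x k ≤ (E t : ℕ∞) := by
        intro k hk
        by_contra hxk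
        apply hR
        have hyk : y k = ⊤ := if_neg hxk
        have hterm : (e.b k : ℕ∞) * y k = ⊤ := by
          rw [hyk]
          simp [hk]
        have hsum : (⊤ : ℕ∞) ≤ ∑ i, (e.b i : ℕ∞) * y i := by
          rw [← hterm]
          exact Finset.single_le_sum (f := fun i => (e.b i : ℕ∞) * y i)
            (fun i _ => zero_le) (Finset.mem_univ k)
        have : (∑ i, (e.b i : ℕ∞) * y i) = ⊤ := top_le_iff.mp hsum
        rw [this, add_top]
      have hyx_b : ∀ k, (e.b k : ℕ∞) * y k = (e.b k : ℕ∞) * x k := by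
        intro k
        by_cases hk : e.b k = 0
        · simp [hk]
        · rw [hy_small k (hbvar k hk)]
      have hReq : (e.b0 : ℕ∞) + ∑ i, (e.b i : ℕ∞) * y i
          = (e.b0 : ℕ∞) + ∑ i, (e.b i : ℕ∞) * x i := by
        rw [Finset.sum_congr rfl (fun k _ => hyx_b k)]
      -- numeric bound on the right-hand side
      have hRbound : (e.b0 : ℕ∞) + ∑ i, (e.b i : ℕ∞) * x i ≤ ((E (t + 1) : ℕ) : ℕ∞) := by
        have hterm : ∀ k : Fin n, (e.b k : ℕ∞) * x k ≤ ((e.b k * E t : ℕ) : ℕ∞) := by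
          intro k
          by_cases hk : e.b k = 0
          · simp [hk]
          · rw [Nat.cast_mul]
            exact mul_le_mul_right (hbvar k hk) _
        calc (e.b0 : ℕ∞) + ∑ i, (e.b i : ℕ∞) * x i
            ≤ (e.b0 : ℕ∞) + ∑ i, ((e.b i * E t : ℕ) : ℕ∞) :=
              add_le_add_right (Finset.sum_le_sum (fun k _ => hterm k)) _
        _ = ((e.b0 + ∑ i, e.b i * E t : ℕ) : ℕ∞) := by push_cast; ring
        _ ≤ ((E (t + 1) : ℕ) : ℕ∞) := by
              rw [Nat.cast_le]
              have h1 : ∑ i, e.b i * E t ≤ 2 ^ s * 2 ^ s * E t := by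
                calc ∑ i, e.b i * E t ≤ ∑ _i : Fin n, 2 ^ s * E t :=
                      Finset.sum_le_sum (fun i _ =>
                        Nat.mul_le_mul_right _ (le_of_lt (hb e he i)))
                _ = n * (2 ^ s * E t) := by simp [Finset.sum_const, mul_comm]
                _ ≤ 2 ^ s * (2 ^ s * E t) := by
                      have hn2 : n ≤ 2 ^ s := le_trans hns (Nat.le_of_lt (Nat.lt_two_pow_self))
                      exact Nat.mul_le_mul_right _ hn2
                _ = 2 ^ s * 2 ^ s * E t := by ring
              have h2 := hb0 e he
              have h3 := hEstep t
              omega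
      -- all variables with positive a-coefficient are small too
      have havar : ∀ k, e.a k ≠ 0 → x k ≤ (E t : ℕ∞) := by
        intro k hk
        by_contra hxk
        have hlt : (E t : ℕ∞) < x k := not_le.mp hxk
        have hx1 : x k ≤ (e.a k : ℕ∞) * x k := by
          have h1 : (1 : ℕ∞) ≤ (e.a k : ℕ∞) := by
            exact_mod_cast Nat.one_le_iff_ne_zero.mpr hk
          calc x k = 1 * x k := (one_mul _).symm
          _ ≤ (e.a k : ℕ∞) * x k := mul_le_mul_left h1 _
        have hx2 : (e.a k : ℕ∞) * x k ≤ ∑ i, (e.a i : ℕ∞) * x i :=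
          Finset.single_le_sum (f := fun i => (e.a i : ℕ∞) * x i)
            (fun i _ => zero_le) (Finset.mem_univ k)
        have hx3 : (∑ i, (e.a i : ℕ∞) * x i) ≤ (e.a0 : ℕ∞) + ∑ i, (e.a i : ℕ∞) * x i :=
          le_add_self
        have hx4 : x k ≤ ((E (t + 1) : ℕ) : ℕ∞) :=
          hx1.trans (hx2.trans (hx3.trans ((hx e he).trans hRbound)))
        exact hempty k ⟨hlt, hx4⟩
      have hyx_a : ∀ k, (e.a k : ℕ∞) * y k = (e.a k : ℕ∞) * x k := by
        intro k
        by_cases hk : e.a k = 0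
        · simp [hk]
        · rw [hy_small k (havar k hk)]
      show (e.a0 : ℕ∞) + ∑ i, (e.a i : ℕ∞) * y i ≤ (e.b0 : ℕ∞) + ∑ i, (e.b i : ℕ∞) * y i
      rw [Finset.sum_congr rfl (fun k _ => hyx_a k), hReq]
      exact hx e he
  · -- the finite values of y are small
    intro i hi
    obtain ⟨hyi, hxi⟩ := hy_ne_top i hi
    rw [hyi]
    refine hxi.trans ?_
    rw [Nat.cast_le]
    have hps : (2 * Polynomial.X ^ 2 + 3 * Polynomial.X + 1 : Polynomial ℕ).eval s
        = (2 * s + 1) * (s + 1) := by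
      simp [Polynomial.eval_add, Polynomial.eval_mul, Polynomial.eval_pow]
      ring
    rw [hps]
    exact Nat.pow_le_pow_right (by norm_num) (Nat.mul_le_mul_left _ (by omega))
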